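/- Let ω₁, ω₂ > 0, H ∈ ℝ^{(n_X n_Y)×(n_X n_Y)}, V₁ = {X ∈ ℝ^{n_X×m_X} : ‖X‖_F = ω₁} and V₂ = {Y ∈ ℝ^{n_Y×m_Y} : ‖Y‖_F = ω₂}. Then the double integral ∬_{V₁×V₂} (X ⊗ Y)ᵀ H (X ⊗ Y) dX dY equals (ω₁² ω₂² |V₁| |V₂| / (n_X m_X n_Y m_Y)) · tr(H) · I_{m_X m_Y}. -/

import Mathlib

open MeasureTheory Matrix Kronecker

noncomputable def matOf {n m : ℕ} (x : EuclideanSpace ℝ (Fin n × Fin m)) :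
    Matrix (Fin n) (Fin m) ℝ := Matrix.of fun i j => x (i, j)

open Metric
open scoped ENNReal NNReal


noncomputable def embedAway {ι : Type*} [Fintype ι] [DecidableEq ι] (i : ι) :
    EuclideanSpace ℝ {j : ι // j ≠ i} →ₗᵢ[ℝ] EuclideanSpace ℝ ι where
  toLinearMap :=
    { toFun := fun y => WithLp.toLp 2 (fun j => if h : j ≠ i then y ⟨j, h⟩ else 0)
      map_add' := by
        intro a b; ext j; by_cases h : j ≠ i <;>
          simp [h, PiLp.add_apply, not_not.mp, dif_neg]
      map_smul' := by
        intro c a; ext j; by_cases h : j ≠ i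
        · simp [h, PiLp.smul_apply]
        · simp [not_not.mp h] }
  norm_map' := by
    intro y
    rw [EuclideanSpace.norm_eq, EuclideanSpace.norm_eq]
    congr 1
    have h1 : ∀ j : ι, ‖(WithLp.toLp 2 (fun j => if h : j ≠ i then y ⟨j, h⟩ else 0) : EuclideanSpace ℝ ι) j‖ ^ 2
        = (fun j : ι => if h : j ≠ i then ‖y ⟨j, h⟩‖ ^ 2 else 0) j := by
      intro j; by_cases h : j ≠ i <;> simp [h]
    simp only [LinearMap.coe_mk, AddHom.coe_mk, h1]
    rw [← Finset.sum_erase_add _ _ (Finset.mem_univ i), dif_neg (by simp), add_zero]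
    rw [Finset.sum_subtype (p := fun j => j ≠ i) (Finset.univ.erase i) (by simp)
      (fun j : ι => if h : j ≠ i then ‖y ⟨j, h⟩‖ ^ 2 else 0)]
    exact Finset.sum_congr rfl fun x _ => by simp [x.2]

theorem embedAway_apply {ι : Type*} [Fintype ι] [DecidableEq ι] (i : ι)
    (y : EuclideanSpace ℝ {j : ι // j ≠ i}) (j : ι) :
    embedAway i y j = if h : j ≠ i then y ⟨j, h⟩ else 0 := by
  by_cases h : j ≠ i <;> rfl

theorem cap_lipschitz {ι : Type*} [Fintype ι] [DecidableEq ι] (i : ι) (ω c s : ℝ)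
    (hω : 0 < ω) (hc : 0 < c) (hs : |s| = 1) :
    LipschitzOnWith (1 + ω / c).toNNReal
      (fun y => y + (s * Real.sqrt (ω ^ 2 - ‖y‖ ^ 2)) • EuclideanSpace.single i (1 : ℝ))
      {y : EuclideanSpace ℝ ι | ‖y‖ ≤ ω ∧ c ≤ Real.sqrt (ω ^ 2 - ‖y‖ ^ 2)} := by
  apply LipschitzOnWith.of_dist_le_mul
  intro y hy z hz
  obtain ⟨hyn, hhy⟩ := hy
  obtain ⟨hzn, hhz⟩ := hz
  have hy0 : (0:ℝ) ≤ ω ^ 2 - ‖y‖ ^ 2 := by nlinarith [norm_nonneg y]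
  have hz0 : (0:ℝ) ≤ ω ^ 2 - ‖z‖ ^ 2 := by nlinarith [norm_nonneg z]
  have hy2 : Real.sqrt (ω ^ 2 - ‖y‖ ^ 2) ^ 2 = ω ^ 2 - ‖y‖ ^ 2 := Real.sq_sqrt hy0
  have hz2 : Real.sqrt (ω ^ 2 - ‖z‖ ^ 2) ^ 2 = ω ^ 2 - ‖z‖ ^ 2 := Real.sq_sqrt hz0
  set a := Real.sqrt (ω ^ 2 - ‖y‖ ^ 2) with ha
  set b := Real.sqrt (ω ^ 2 - ‖z‖ ^ 2) with hb
  have hdiff : |a - b| ≤ (ω / c) * dist y z := by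
    have hab : (a - b) * (a + b) = ‖z‖ ^ 2 - ‖y‖ ^ 2 := by nlinarith [hy2, hz2]
    have habs : |a - b| * (a + b) ≤ |‖z‖ ^ 2 - ‖y‖ ^ 2| := by
      rw [← hab, abs_mul, abs_of_nonneg (by linarith : (0:ℝ) ≤ a + b)]
    have h1 : |‖z‖ ^ 2 - ‖y‖ ^ 2| ≤ 2 * ω * dist y z := by
      have hd : |‖z‖ - ‖y‖| ≤ dist y z := by
        rw [dist_comm]; exact abs_norm_sub_norm_le z y
      calc |‖z‖ ^ 2 - ‖y‖ ^ 2| = |‖z‖ - ‖y‖| * |‖z‖ + ‖y‖| := by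
            rw [← abs_mul]; ring_nf
        _ ≤ dist y z * (2 * ω) := by
            apply mul_le_mul hd _ (abs_nonneg _) dist_nonneg
            rw [abs_of_nonneg (by positivity)]; linarith
        _ = 2 * ω * dist y z := by ring
    have h2c : 2 * c ≤ a + b := by linarith
    calc |a - b| ≤ |‖z‖ ^ 2 - ‖y‖ ^ 2| / (2 * c) := by
          rw [le_div_iff₀ (by linarith)]
          calc |a - b| * (2 * c) ≤ |a - b| * (a + b) :=
                mul_le_mul_of_nonneg_left h2c (abs_nonneg _)
            _ ≤ _ := habs
      _ ≤ (2 * ω * dist y z) / (2 * c) := by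
          exact div_le_div_of_nonneg_right h1 (by linarith)
      _ = (ω / c) * dist y z := by field_simp
  have hnorm1 : ‖EuclideanSpace.single i (1 : ℝ)‖ = 1 := by
    simp [EuclideanSpace.norm_single]
  calc dist (y + (s * a) • EuclideanSpace.single i (1:ℝ))
        (z + (s * b) • EuclideanSpace.single i (1:ℝ))
      ≤ dist y z + |s * a - s * b| := by
        rw [dist_eq_norm]
        have key : y + (s * a) • EuclideanSpace.single i (1:ℝ)
            - (z + (s * b) • EuclideanSpace.single i (1:ℝ))
            = (y - z) + (s * a - s * b) • EuclideanSpace.single i (1:ℝ) := by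
          rw [sub_smul]; abel
        rw [key]
        refine (norm_add_le _ _).trans ?_
        rw [norm_smul, hnorm1, mul_one, Real.norm_eq_abs, ← dist_eq_norm]
    _ ≤ dist y z + (ω / c) * dist y z := by
        rw [← mul_sub, abs_mul, hs, one_mul]
        linarith [hdiff]
    _ = (1 + ω / c) * dist y z := by ring
    _ = (1 + ω / c).toNNReal * dist y z := by
        rw [Real.coe_toNNReal _ (by positivity)]

theorem sphere_hausdorff_lt_top {ι : Type*} [Fintype ι] [DecidableEq ι] [Nonempty ι]
    (ω : ℝ) (hω : 0 < ω) :
    μH[(Fintype.card ι : ℝ) - 1] (sphere (0 : EuclideanSpace ℝ ι) ω) < ⊤ := by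
  set n := Fintype.card ι with hn
  have hn1 : 1 ≤ n := Fintype.card_pos
  have hd0 : (0 : ℝ) ≤ (n : ℝ) - 1 := by
    have : (1 : ℝ) ≤ (n : ℝ) := by exact_mod_cast hn1
    linarith
  set d : ℝ := (n : ℝ) - 1 with hd
  have hn0 : (0:ℝ) < (n : ℝ) := by exact_mod_cast Nat.lt_of_lt_of_le Nat.zero_lt_one hn1
  have hdivn : (0:ℝ) < ω ^ 2 / n := by positivity
  set c : ℝ := Real.sqrt (ω ^ 2 / n) with hc
  have hc0 : 0 < c := Real.sqrt_pos.mpr hdivn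
  -- embedded balls have finite measure
  have hball : ∀ i : ι, μH[d] ((embedAway i) '' (Metric.closedBall 0 ω)) < ⊤ := by
    intro i
    rw [(embedAway i).isometry.hausdorffMeasure_image (Or.inl hd0)]
    have hcard : Fintype.card {j : ι // j ≠ i} = n - 1 := by
      simp [Fintype.card_subtype_compl, hn]
    have hdim : d = (Module.finrank ℝ (EuclideanSpace ℝ {j : ι // j ≠ i}) : ℝ) := by
      rw [finrank_euclideanSpace, hcard, Nat.cast_sub hn1, Nat.cast_one]
    rw [hdim]
    exact (isCompact_closedBall _ _).measure_lt_top
  -- cap finite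
  have hCfin : ∀ (i : ι) (s : ℝ), |s| = 1 →
      μH[d] {x : EuclideanSpace ℝ ι | x ∈ sphere (0 : EuclideanSpace ℝ ι) ω ∧
        ω ^ 2 / n ≤ (x i) ^ 2 ∧ 0 ≤ s * x i} < ⊤ := by
    intro i s hs
    have hBsub : {y : EuclideanSpace ℝ ι | y i = 0 ∧ ‖y‖ ^ 2 ≤ ω ^ 2 - ω ^ 2 / n}
        ⊆ (embedAway i) '' (Metric.closedBall 0 ω) := by
      intro y hy
      obtain ⟨hyi, hyb⟩ := hy
      have hEq : embedAway i (WithLp.toLp 2 (fun j => y (j : ι))) = y := by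
        ext j
        rw [embedAway_apply]
        by_cases h : j ≠ i
        · simp [h]
        · have := not_not.mp h; subst this; simp [hyi]
      refine ⟨WithLp.toLp 2 (fun j => y (j : ι)), ?_, hEq⟩
      rw [Metric.mem_closedBall, dist_zero_right, ← (embedAway i).norm_map, hEq]
      nlinarith [norm_nonneg y, hdivn]
    have hBset : {y : EuclideanSpace ℝ ι | y i = 0 ∧ ‖y‖ ^ 2 ≤ ω ^ 2 - ω ^ 2 / n}
        ⊆ {y : EuclideanSpace ℝ ι | ‖y‖ ≤ ω ∧ c ≤ Real.sqrt (ω ^ 2 - ‖y‖ ^ 2)} := by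
      intro y hy
      obtain ⟨_, hyb⟩ := hy
      constructor
      · nlinarith [norm_nonneg y, hdivn]
      · rw [hc]; exact Real.sqrt_le_sqrt (by linarith)
    have hCsub : {x : EuclideanSpace ℝ ι | x ∈ sphere (0 : EuclideanSpace ℝ ι) ω ∧
          ω ^ 2 / n ≤ (x i) ^ 2 ∧ 0 ≤ s * x i}
        ⊆ (fun y => y + (s * Real.sqrt (ω ^ 2 - ‖y‖ ^ 2)) • EuclideanSpace.single i (1:ℝ)) ''
            {y : EuclideanSpace ℝ ι | y i = 0 ∧ ‖y‖ ^ 2 ≤ ω ^ 2 - ω ^ 2 / n} := by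
      intro x hx
      obtain ⟨hsph, hbig, hsign⟩ := hx
      have hxn : ‖x‖ = ω := by rwa [mem_sphere_iff_norm, sub_zero] at hsph
      refine ⟨x - (x i) • EuclideanSpace.single i (1:ℝ), ⟨?_, ?_⟩, ?_⟩
      · simp [PiLp.sub_apply, PiLp.smul_apply, EuclideanSpace.single_apply]
      · have hyn : ‖x - (x i) • EuclideanSpace.single i (1:ℝ)‖ ^ 2 = ω ^ 2 - (x i) ^ 2 := by
          rw [norm_sub_sq_real, hxn, norm_smul, EuclideanSpace.norm_single]
          have hinner : (inner ℝ x ((x i) • EuclideanSpace.single i (1:ℝ)) : ℝ)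
              = (x i) * (x i) := by
            rw [real_inner_smul_right, EuclideanSpace.inner_single_right]
            simp [mul_comm]
          rw [hinner]
          simp only [Real.norm_eq_abs, norm_one, mul_one]
          rw [sq_abs]
          ring
        rw [hyn]; linarith
      · have hyn : ‖x - (x i) • EuclideanSpace.single i (1:ℝ)‖ ^ 2 = ω ^ 2 - (x i) ^ 2 := by
          rw [norm_sub_sq_real, hxn, norm_smul, EuclideanSpace.norm_single]
          have hinner : (inner ℝ x ((x i) • EuclideanSpace.single i (1:ℝ)) : ℝ)
              = (x i) * (x i) := by
            rw [real_inner_smul_right, EuclideanSpace.inner_single_right]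
            simp [mul_comm]
          rw [hinner]
          simp only [Real.norm_eq_abs, norm_one, mul_one]
          rw [sq_abs]
          ring
        simp only
        rw [hyn]
        have hsqrt : Real.sqrt (ω ^ 2 - (ω ^ 2 - (x i) ^ 2)) = |x i| := by
          have h1 : ω ^ 2 - (ω ^ 2 - (x i) ^ 2) = (x i) ^ 2 := by ring
          rw [h1, Real.sqrt_sq_eq_abs]
        rw [hsqrt]
        have hsx : s * |x i| = x i := by
          rcases (abs_eq (le_of_lt one_pos)).mp hs with h1 | h1
          · rw [h1, one_mul]; rw [h1, one_mul] at hsign; exact abs_of_nonneg hsign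
          · rw [h1] at hsign ⊢
            have hle : x i ≤ 0 := by linarith
            rw [abs_of_nonpos hle]; ring
        rw [hsx, sub_add_cancel]
    calc μH[d] {x : EuclideanSpace ℝ ι | x ∈ sphere (0 : EuclideanSpace ℝ ι) ω ∧
          ω ^ 2 / n ≤ (x i) ^ 2 ∧ 0 ≤ s * x i}
        ≤ μH[d] ((fun y => y + (s * Real.sqrt (ω ^ 2 - ‖y‖ ^ 2)) •
            EuclideanSpace.single i (1:ℝ)) ''
            {y : EuclideanSpace ℝ ι | y i = 0 ∧ ‖y‖ ^ 2 ≤ ω ^ 2 - ω ^ 2 / n}) :=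
          measure_mono hCsub
      _ ≤ ((1 + ω / c).toNNReal : ℝ≥0∞) ^ d *
            μH[d] {y : EuclideanSpace ℝ ι | y i = 0 ∧ ‖y‖ ^ 2 ≤ ω ^ 2 - ω ^ 2 / n} :=
          ((cap_lipschitz i ω c s hω hc0 hs).mono hBset).hausdorffMeasure_image_le hd0
      _ ≤ ((1 + ω / c).toNNReal : ℝ≥0∞) ^ d *
            μH[d] ((embedAway i) '' (Metric.closedBall 0 ω)) := by
          gcongr
      _ < ⊤ := ENNReal.mul_lt_top
          (ENNReal.rpow_lt_top_of_nonneg hd0 ENNReal.coe_ne_top) (hball i)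
  -- cover
  have hcover : sphere (0 : EuclideanSpace ℝ ι) ω ⊆
      ⋃ i : ι, ({x : EuclideanSpace ℝ ι | x ∈ sphere (0 : EuclideanSpace ℝ ι) ω ∧
          ω ^ 2 / n ≤ (x i) ^ 2 ∧ 0 ≤ (1:ℝ) * x i} ∪
        {x : EuclideanSpace ℝ ι | x ∈ sphere (0 : EuclideanSpace ℝ ι) ω ∧
          ω ^ 2 / n ≤ (x i) ^ 2 ∧ 0 ≤ (-1:ℝ) * x i}) := by
    intro x hx
    have hxn : ‖x‖ = ω := by rwa [mem_sphere_iff_norm, sub_zero] at hx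
    have hsum : ∑ j : ι, (x j) ^ 2 = ω ^ 2 := by
      have h := EuclideanSpace.norm_eq x
      rw [hxn] at h
      rw [h, Real.sq_sqrt (by positivity)]
      exact Finset.sum_congr rfl fun j _ => by rw [Real.norm_eq_abs, sq_abs]
    have hex : ∃ j : ι, ω ^ 2 / n ≤ (x j) ^ 2 := by
      by_contra hcon
      push_neg at hcon
      have hlt : ∑ j : ι, (x j) ^ 2 < ∑ _j : ι, ω ^ 2 / n :=
        Finset.sum_lt_sum_of_nonempty ⟨Classical.arbitrary ι, Finset.mem_univ _⟩
          fun j _ => hcon j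
      rw [Finset.sum_const, Finset.card_univ, nsmul_eq_mul, hsum, ← hn] at hlt
      rw [mul_div_cancel₀ _ (ne_of_gt hn0)] at hlt
      exact lt_irrefl _ hlt
    obtain ⟨j, hj⟩ := hex
    apply Set.mem_iUnion.mpr ⟨j, ?_⟩
    rcases le_or_gt 0 (x j) with h | h
    · exact Or.inl ⟨hx, hj, by simpa using h⟩
    · exact Or.inr ⟨hx, hj, by simpa using h.le⟩
  refine lt_of_le_of_lt (measure_mono hcover)
    (lt_of_le_of_lt (measure_iUnion_le _) ?_)
  rw [tsum_fintype]
  apply ENNReal.sum_lt_top.mpr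
  intro i _
  exact lt_of_le_of_lt (measure_union_le _ _)
    (ENNReal.add_lt_top.mpr ⟨hCfin i 1 (by norm_num), hCfin i (-1) (by norm_num)⟩)

section Moment

variable {ι : Type*} [Fintype ι] [DecidableEq ι] [Nonempty ι]

theorem setIntegral_comp_linearIsometryEquiv (ω : ℝ) (e : EuclideanSpace ℝ ι ≃ₗᵢ[ℝ] EuclideanSpace ℝ ι)
    (f : EuclideanSpace ℝ ι → ℝ) :
    ∫ x in sphere (0 : EuclideanSpace ℝ ι) ω, f (e x) ∂μH[(Fintype.card ι : ℝ) - 1]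
      = ∫ x in sphere (0 : EuclideanSpace ℝ ι) ω, f x ∂μH[(Fintype.card ι : ℝ) - 1] := by
  have hpre : ⇑e ⁻¹' sphere (0 : EuclideanSpace ℝ ι) ω = sphere (0 : EuclideanSpace ℝ ι) ω := by
    have := e.toIsometryEquiv.preimage_sphere 0 ω
    simpa using this
  calc ∫ x in sphere (0 : EuclideanSpace ℝ ι) ω, f (e x) ∂μH[(Fintype.card ι : ℝ) - 1]
      = ∫ x in ⇑e ⁻¹' sphere (0 : EuclideanSpace ℝ ι) ω, f (e x)
          ∂μH[(Fintype.card ι : ℝ) - 1] := by rw [hpre]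
    _ = ∫ x in sphere (0 : EuclideanSpace ℝ ι) ω, f x ∂μH[(Fintype.card ι : ℝ) - 1] :=
        (e.toIsometryEquiv.measurePreserving_hausdorffMeasure _).setIntegral_preimage_emb
          e.toHomeomorph.measurableEmbedding f _

theorem coord_abs_le_norm (x : EuclideanSpace ℝ ι) (i : ι) : |x i| ≤ ‖x‖ := by
  rw [EuclideanSpace.norm_eq, ← Real.sqrt_sq_eq_abs]
  apply Real.sqrt_le_sqrt
  have h := Finset.single_le_sum (f := fun j : ι => ‖x j‖ ^ 2)
    (fun j _ => by positivity) (Finset.mem_univ i)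
  simpa [Real.norm_eq_abs, sq_abs] using h

theorem sphere_integrableOn_mul (ω : ℝ) (hω : 0 < ω) (i j : ι) :
    IntegrableOn (fun x : EuclideanSpace ℝ ι => x i * x j)
      (sphere (0 : EuclideanSpace ℝ ι) ω) μH[(Fintype.card ι : ℝ) - 1] := by
  haveI : IsFiniteMeasure
      ((μH[(Fintype.card ι : ℝ) - 1] : Measure (EuclideanSpace ℝ ι)).restrict
        (sphere 0 ω)) := by
    constructor
    rw [Measure.restrict_apply_univ]
    exact sphere_hausdorff_lt_top ω hω
  have hcont : Continuous fun x : EuclideanSpace ℝ ι => x i * x j :=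
    ((EuclideanSpace.proj (𝕜 := ℝ) i).continuous).mul ((EuclideanSpace.proj (𝕜 := ℝ) j).continuous)
  refine Integrable.mono' (integrable_const (ω ^ 2)) hcont.aestronglyMeasurable ?_
  filter_upwards [ae_restrict_mem Metric.isClosed_sphere.measurableSet] with x hx
  have hxn : ‖x‖ = ω := by rwa [mem_sphere_iff_norm, sub_zero] at hx
  have hi : |x i| ≤ ω := hxn ▸ coord_abs_le_norm x i
  have hj : |x j| ≤ ω := hxn ▸ coord_abs_le_norm x j
  rw [Real.norm_eq_abs, abs_mul]
  nlinarith [abs_nonneg (x i), abs_nonneg (x j)]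

theorem sphere_moment (ω : ℝ) (hω : 0 < ω) (i j : ι) :
    ∫ x in sphere (0 : EuclideanSpace ℝ ι) ω, x i * x j ∂μH[(Fintype.card ι : ℝ) - 1]
      = if i = j then ω ^ 2 * (μH[(Fintype.card ι : ℝ) - 1]
          (sphere (0 : EuclideanSpace ℝ ι) ω)).toReal / Fintype.card ι else 0 := by
  by_cases hij : i = j
  · subst hij
    simp only [if_pos rfl]
    -- all diagonal moments are equal
    have hswap : ∀ i' : ι,
        ∫ x in sphere (0 : EuclideanSpace ℝ ι) ω, x i' * x i' ∂μH[(Fintype.card ι : ℝ) - 1]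
          = ∫ x in sphere (0 : EuclideanSpace ℝ ι) ω, x i * x i ∂μH[(Fintype.card ι : ℝ) - 1] := by
      intro i'
      have := setIntegral_comp_linearIsometryEquiv ω
        (LinearIsometryEquiv.piLpCongrLeft 2 ℝ ℝ (Equiv.swap i i'))
        (fun x => x i' * x i')
      rw [← this]
      congr 1
      funext x
      simp only [LinearIsometryEquiv.piLpCongrLeft_apply, Equiv.piCongrLeft'_apply,
        Equiv.symm_swap]
      rw [Equiv.swap_apply_right]
    have hsum : ∑ i' : ι, (∫ x in sphere (0 : EuclideanSpace ℝ ι) ω,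
          x i' * x i' ∂μH[(Fintype.card ι : ℝ) - 1])
        = ω ^ 2 * (μH[(Fintype.card ι : ℝ) - 1]
            (sphere (0 : EuclideanSpace ℝ ι) ω)).toReal := by
      rw [← integral_finset_sum _ (fun i' _ => sphere_integrableOn_mul ω hω i' i')]
      rw [setIntegral_congr_fun Metric.isClosed_sphere.measurableSet
        (g := fun _ => ω ^ 2) ?_]
      · rw [setIntegral_const, smul_eq_mul, mul_comm, measureReal_def]
      · intro x hx
        have hxn : ‖x‖ = ω := by rwa [mem_sphere_iff_norm, sub_zero] at hx
        have h := EuclideanSpace.norm_eq x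
        rw [hxn] at h
        simp only
        calc ∑ k : ι, x k * x k = ∑ k : ι, ‖x k‖ ^ 2 :=
              Finset.sum_congr rfl fun k _ => by rw [Real.norm_eq_abs, sq_abs]; ring
          _ = ω ^ 2 := by rw [h, Real.sq_sqrt (by positivity)]
    have hsum2 : (Fintype.card ι : ℝ) * (∫ x in sphere (0 : EuclideanSpace ℝ ι) ω,
          x i * x i ∂μH[(Fintype.card ι : ℝ) - 1])
        = ω ^ 2 * (μH[(Fintype.card ι : ℝ) - 1]
            (sphere (0 : EuclideanSpace ℝ ι) ω)).toReal := by
      rw [← hsum]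
      rw [Finset.sum_congr rfl fun i' _ => hswap i']
      rw [Finset.sum_const, Finset.card_univ, nsmul_eq_mul]
    have hcard : (0:ℝ) < Fintype.card ι := by
      exact_mod_cast Fintype.card_pos
    rw [if_pos trivial, eq_div_iff hcard.ne']
    linarith [hsum2]
  · rw [if_neg hij]
    have key := setIntegral_comp_linearIsometryEquiv ω
      (LinearIsometryEquiv.piLpCongrRight 2
        (fun k : ι => if k = i then LinearIsometryEquiv.neg ℝ (E := ℝ) else
          LinearIsometryEquiv.refl ℝ ℝ))
      (fun x => x i * x j)
    have happ : ∀ x : EuclideanSpace ℝ ι,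
        (LinearIsometryEquiv.piLpCongrRight 2
          (fun k : ι => if k = i then LinearIsometryEquiv.neg ℝ (E := ℝ) else
            LinearIsometryEquiv.refl ℝ ℝ) x) i = -(x i) ∧
        (LinearIsometryEquiv.piLpCongrRight 2
          (fun k : ι => if k = i then LinearIsometryEquiv.neg ℝ (E := ℝ) else
            LinearIsometryEquiv.refl ℝ ℝ) x) j = x j := by
      intro x
      constructor
      · simp [LinearIsometryEquiv.piLpCongrRight_apply]
      · simp [LinearIsometryEquiv.piLpCongrRight_apply, Ne.symm hij, hij]
    have hfe : ∀ x : EuclideanSpace ℝ ι,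
        (LinearIsometryEquiv.piLpCongrRight 2
          (fun k : ι => if k = i then LinearIsometryEquiv.neg ℝ (E := ℝ) else
            LinearIsometryEquiv.refl ℝ ℝ) x) i *
        (LinearIsometryEquiv.piLpCongrRight 2
          (fun k : ι => if k = i then LinearIsometryEquiv.neg ℝ (E := ℝ) else
            LinearIsometryEquiv.refl ℝ ℝ) x) j = -(x i * x j) := by
      intro x
      rw [(happ x).1, (happ x).2]; ring
    simp only [hfe] at key
    rw [integral_neg] at key
    linarith [key]

end Moment

/-- `∬_{V₁×V₂} (X ⊗ Y)ᵀ H (X ⊗ Y) dX dY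
  = (ω₁² ω₂² |V₁| |V₂| /(n_X m_X n_Y m_Y)) tr(H) I_{m_X m_Y}`. -/
theorem stmt2 (nX mX nY mY : ℕ) (hnX : 0 < nX) (hmX : 0 < mX) (hnY : 0 < nY) (hmY : 0 < mY)
    (ω₁ ω₂ : ℝ) (hω₁ : 0 < ω₁) (hω₂ : 0 < ω₂)
    (H : Matrix (Fin nX × Fin nY) (Fin nX × Fin nY) ℝ) :
    ∀ a b : Fin mX × Fin mY,
      (∫ x in Metric.sphere (0 : EuclideanSpace ℝ (Fin nX × Fin mX)) ω₁,
        ∫ y in Metric.sphere (0 : EuclideanSpace ℝ (Fin nY × Fin mY)) ω₂,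
          ((matOf x ⊗ₖ matOf y)ᵀ * H * (matOf x ⊗ₖ matOf y)) a b
            ∂(μH[(nY * mY : ℝ) - 1]) ∂(μH[(nX * mX : ℝ) - 1])) =
        ω₁ ^ 2 * ω₂ ^ 2 *
            (μH[(nX * mX : ℝ) - 1]
              (Metric.sphere (0 : EuclideanSpace ℝ (Fin nX × Fin mX)) ω₁)).toReal *
            (μH[(nY * mY : ℝ) - 1]
              (Metric.sphere (0 : EuclideanSpace ℝ (Fin nY × Fin mY)) ω₂)).toReal /
            (nX * mX * nY * mY) * H.trace *
          (1 : Matrix (Fin mX × Fin mY) (Fin mX × Fin mY) ℝ) a b := by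
  intro a b
  haveI : Nonempty (Fin nX × Fin mX) := ⟨(⟨0, hnX⟩, ⟨0, hmX⟩)⟩
  haveI : Nonempty (Fin nY × Fin mY) := ⟨(⟨0, hnY⟩, ⟨0, hmY⟩)⟩
  have hc1 : ((nX : ℝ) * mX - 1) = ((Fintype.card (Fin nX × Fin mX) : ℝ) - 1) := by
    simp [Nat.cast_mul]
  have hc2 : ((nY : ℝ) * mY - 1) = ((Fintype.card (Fin nY × Fin mY) : ℝ) - 1) := by
    simp [Nat.cast_mul]
  rw [hc1, hc2]
  set S₁ := Metric.sphere (0 : EuclideanSpace ℝ (Fin nX × Fin mX)) ω₁ with hS₁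
  set S₂ := Metric.sphere (0 : EuclideanSpace ℝ (Fin nY × Fin mY)) ω₂ with hS₂
  set cX : ℝ := ω₁ ^ 2 * (μH[(Fintype.card (Fin nX × Fin mX) : ℝ) - 1] S₁).toReal /
    Fintype.card (Fin nX × Fin mX) with hcX
  set cY : ℝ := ω₂ ^ 2 * (μH[(Fintype.card (Fin nY × Fin mY) : ℝ) - 1] S₂).toReal /
    Fintype.card (Fin nY × Fin mY) with hcY
  -- expand the matrix entry
  have hexp : ∀ (x : EuclideanSpace ℝ (Fin nX × Fin mX))
      (y : EuclideanSpace ℝ (Fin nY × Fin mY)),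
      ((matOf x ⊗ₖ matOf y)ᵀ * H * (matOf x ⊗ₖ matOf y)) a b
      = ∑ p : Fin nX × Fin nY, ∑ q : Fin nX × Fin nY,
          (x (p.1, a.1) * x (q.1, b.1) * H p q) * (y (p.2, a.2) * y (q.2, b.2)) := by
    intro x y
    simp only [Matrix.mul_apply, Matrix.transpose_apply, Matrix.kroneckerMap_apply, matOf,
      Matrix.of_apply, Finset.sum_mul]
    rw [Finset.sum_comm]
    exact Finset.sum_congr rfl fun p _ => Finset.sum_congr rfl fun q _ => by ring
  simp only [hexp]
  -- inner integral
  have hinner : ∀ x : EuclideanSpace ℝ (Fin nX × Fin mX),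
      (∫ y in S₂, ∑ p : Fin nX × Fin nY, ∑ q : Fin nX × Fin nY,
          (x (p.1, a.1) * x (q.1, b.1) * H p q) * (y (p.2, a.2) * y (q.2, b.2))
        ∂μH[(Fintype.card (Fin nY × Fin mY) : ℝ) - 1])
      = ∑ p : Fin nX × Fin nY, ∑ q : Fin nX × Fin nY,
          (H p q * (if (p.2, a.2) = (q.2, b.2) then cY else 0)) *
            (x (p.1, a.1) * x (q.1, b.1)) := by
    intro x
    rw [integral_finset_sum _ (fun p _ => integrable_finset_sum _ (fun q _ =>
      (sphere_integrableOn_mul ω₂ hω₂ (p.2, a.2) (q.2, b.2)).const_mul _))]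
    refine Finset.sum_congr rfl fun p _ => ?_
    rw [integral_finset_sum _ (fun q _ =>
      (sphere_integrableOn_mul ω₂ hω₂ (p.2, a.2) (q.2, b.2)).const_mul _)]
    refine Finset.sum_congr rfl fun q _ => ?_
    rw [integral_const_mul, sphere_moment ω₂ hω₂ (p.2, a.2) (q.2, b.2)]
    ring
  simp only [hinner]
  -- outer integral
  rw [integral_finset_sum _ (fun p _ => integrable_finset_sum _ (fun q _ =>
    (sphere_integrableOn_mul ω₁ hω₁ (p.1, a.1) (q.1, b.1)).const_mul _))]
  have houter : ∀ p : Fin nX × Fin nY,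
      (∫ x in S₁, ∑ q : Fin nX × Fin nY,
          (H p q * (if (p.2, a.2) = (q.2, b.2) then cY else 0)) *
            (x (p.1, a.1) * x (q.1, b.1))
        ∂μH[(Fintype.card (Fin nX × Fin mX) : ℝ) - 1])
      = ∑ q : Fin nX × Fin nY,
          (H p q * (if (p.2, a.2) = (q.2, b.2) then cY else 0)) *
            (if (p.1, a.1) = (q.1, b.1) then cX else 0) := by
    intro p
    rw [integral_finset_sum _ (fun q _ =>
      (sphere_integrableOn_mul ω₁ hω₁ (p.1, a.1) (q.1, b.1)).const_mul _)]
    refine Finset.sum_congr rfl fun q _ => ?_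
    rw [integral_const_mul, sphere_moment ω₁ hω₁ (p.1, a.1) (q.1, b.1)]
  simp only [houter]
  -- final algebra
  have hcard1 : ((Fintype.card (Fin nX × Fin mX) : ℝ)) = (nX : ℝ) * mX := by
    simp [Nat.cast_mul]
  have hcard2 : ((Fintype.card (Fin nY × Fin mY) : ℝ)) = (nY : ℝ) * mY := by
    simp [Nat.cast_mul]
  by_cases hab : a = b
  · subst hab
    have hterm : ∀ p q : Fin nX × Fin nY,
        (H p q * (if (p.2, a.2) = (q.2, a.2) then cY else 0)) *
          (if (p.1, a.1) = (q.1, a.1) then cX else 0)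
        = if q = p then (cX * cY) * H p q else 0 := by
      intro p q
      by_cases hq : q = p
      · subst hq; simp; ring
      · rw [if_neg hq]
        by_cases h2 : (p.2, a.2) = (q.2, a.2)
        · by_cases h1 : (p.1, a.1) = (q.1, a.1)
          · have e1 : q.1 = p.1 := (congrArg Prod.fst h1).symm
            have e2 : q.2 = p.2 := (congrArg Prod.fst h2).symm
            exact absurd (Prod.ext_iff.mpr ⟨e1, e2⟩) hq
          · simp [h1]
        · simp [h2]
    simp only [hterm]
    rw [Finset.sum_congr rfl fun p _ => Finset.sum_ite_eq' Finset.univ p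
      (fun q => (cX * cY) * H p q)]
    simp only [Finset.mem_univ, if_true]
    rw [Matrix.one_apply_eq]
    have htr : ∑ p : Fin nX × Fin nY, (cX * cY) * H p p = (cX * cY) * H.trace := by
      rw [← Finset.mul_sum]
      congr 1
    rw [htr, hcX, hcY, hcard1, hcard2]
    have h1 : (0:ℝ) < (nX : ℝ) * mX := by positivity
    have h2 : (0:ℝ) < (nY : ℝ) * mY := by positivity
    field_simp
  · have hterm : ∀ p q : Fin nX × Fin nY,
        (H p q * (if (p.2, a.2) = (q.2, b.2) then cY else 0)) *
          (if (p.1, a.1) = (q.1, b.1) then cX else 0) = 0 := by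
      intro p q
      by_cases h1 : (p.1, a.1) = (q.1, b.1)
      · by_cases h2 : (p.2, a.2) = (q.2, b.2)
        · exfalso
          apply hab
          have e1 := (Prod.ext_iff.mp h1).2
          have e2 := (Prod.ext_iff.mp h2).2
          exact Prod.ext e1 e2
        · simp [h2]
      · simp [h1]
    simp only [hterm, Finset.sum_const_zero]
    rw [Matrix.one_apply_ne hab, mul_zero]
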